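/- Let H be an m×n complex matrix and let S be a subset of the row indices {1,…,m}. Let H_S denote the submatrix of H consisting of the rows indexed by S, and H_{Sᶜ} the submatrix consisting of the remaining rows. Then det(1 + Hᴴ H) ≤ det(1 + H_Sᴴ H_S) · det(1 + H_{Sᶜ}ᴴ H_{Sᶜ}), where 1 denotes the n×n identity matrix and Hᴴ denotes the conjugate transpose. -/

import Mathlib

open Matrix ComplexOrder

variable {k p q N : Type*} [Fintype k] [DecidableEq k] [Fintype p] [DecidableEq p] [Fintype q] [DecidableEq q] [Fintype N] [DecidableEq N]

/-- det(1+D) ≥ 1 for PSD D. -/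
lemma aux_one_le_det {D : Matrix k k ℂ} (hD : D.PosSemidef) : (1:ℂ) ≤ (1 + D).det := by
  have h1 : (1 + D).PosSemidef := Matrix.PosSemidef.one.add hD
  have heig : ∀ i, (1:ℝ) ≤ h1.1.eigenvalues i := by
    intro i
    rw [h1.1.eigenvalues_eq]
    set v := (h1.1.eigenvectorBasis i : EuclideanSpace ℂ k)
    have hmv : (1 + D) *ᵥ ⇑v = ⇑v + D *ᵥ ⇑v := by
      rw [add_mulVec, one_mulVec]
    rw [hmv, dotProduct_add, map_add]
    have h2 : RCLike.re (dotProduct (star ⇑v) ⇑v) = 1 := by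
      have := h1.1.eigenvectorBasis.orthonormal.1 i
      have : dotProduct (star ⇑v) ⇑v = (1:ℂ) := by
        have hinner : (inner (𝕜 := ℂ) v v) = dotProduct (star ⇑v) ⇑v :=
          (EuclideanSpace.inner_eq_star_dotProduct v v).trans (dotProduct_comm _ _)
        rw [← hinner, inner_self_eq_norm_sq_to_K, this]
        norm_num
      rw [this]; simp
    rw [h2]
    have := hD.re_dotProduct_nonneg ⇑v
    linarith
  have h3 : (1:ℝ) ≤ ∏ i, h1.1.eigenvalues i := by
    calc (1:ℝ) = ∏ _i : k, (1:ℝ) := by simp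
      _ ≤ ∏ i, h1.1.eigenvalues i :=
          Finset.prod_le_prod (fun i _ => zero_le_one) (fun i _ => heig i)
  calc (1:ℂ) = ((1:ℝ):ℂ) := by norm_num
    _ ≤ ((∏ i, h1.1.eigenvalues i : ℝ) : ℂ) := by exact_mod_cast h3
    _ = ∏ i, ((h1.1.eigenvalues i : ℝ) : ℂ) := by push_cast; rfl
    _ = (1 + D).det := h1.1.det_eq_prod_eigenvalues.symm

open scoped MatrixOrder in
/-- det monotone under adding PSD, for PosDef base. -/
lemma aux_det_le_det_add {P D : Matrix k k ℂ} (hP : P.PosDef) (hD : D.PosSemidef) :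
    P.det ≤ (P + D).det := by
  set S := CFC.sqrt P with hSdef
  have hSps : S.PosSemidef := (CFC.sqrt_nonneg P).posSemidef
  have hSS : S * S = P := CFC.sqrt_mul_sqrt_self P hP.posSemidef.nonneg
  have hdetS : S.det * S.det = P.det := by rw [← det_mul, hSS]
  have hdS : S.det ≠ 0 := by
    intro h; rw [h, mul_zero] at hdetS; exact hP.det_pos.ne' hdetS.symm
  have hSinv : S * S⁻¹ = 1 := mul_nonsing_inv _ hdS.isUnit
  have hSinv' : S⁻¹ * S = 1 := nonsing_inv_mul _ hdS.isUnit
  have hC : (S⁻¹ * D * S⁻¹).PosSemidef := by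
    have := hD.conjTranspose_mul_mul_same (S⁻¹)
    rwa [(hSps.isHermitian.inv).eq] at this
  have key : P + D = S * (1 + S⁻¹ * D * S⁻¹) * S := by
    rw [Matrix.mul_add, Matrix.mul_one, Matrix.add_mul, hSS]
    congr 1
    rw [← Matrix.mul_assoc, ← Matrix.mul_assoc, hSinv, Matrix.one_mul, Matrix.mul_assoc, hSinv',
      Matrix.mul_one]
  rw [key, det_mul, det_mul, mul_comm S.det, mul_assoc, ← hdetS]
  nth_rewrite 1 [← one_mul (S.det * S.det)]
  have hdet2 : (0:ℂ) ≤ S.det * S.det := by rw [hdetS]; exact hP.det_pos.le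
  exact mul_le_mul_of_nonneg_right (aux_one_le_det hC) hdet2

/-- Key inequality. -/
lemma aux_main (X : Matrix p N ℂ) (Y : Matrix q N ℂ) :
    (1 + (Xᴴ * X + Yᴴ * Y)).det ≤ (1 + Xᴴ * X).det * (1 + Yᴴ * Y).det := by
  set A := Xᴴ * X with hA
  set P := 1 + A with hPdef
  have hApsd : A.PosSemidef := posSemidef_conjTranspose_mul_self X
  have hP : P.PosDef := Matrix.PosDef.one.add_posSemidef hApsd
  have hdP : P.det ≠ 0 := hP.det_pos.ne'
  have hPinv : P * P⁻¹ = 1 := mul_nonsing_inv _ hdP.isUnit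
  have hPinv' : P⁻¹ * P = 1 := nonsing_inv_mul _ hdP.isUnit
  have hPinvH : P⁻¹.PosSemidef := hP.inv.posSemidef
  -- 1 - P⁻¹ is PSD
  have hsub : (1 - P⁻¹).PosSemidef := by
    have hpsd : (A + A * A).PosSemidef := hApsd.add (by
      have := posSemidef_conjTranspose_mul_self A
      rwa [hApsd.isHermitian.eq] at this)
    have h1 : (P⁻¹ * (A + A * A) * P⁻¹).PosSemidef := by
      have := hpsd.conjTranspose_mul_mul_same (P⁻¹)
      rwa [(hPinvH.isHermitian).eq] at this
    have h2 : P⁻¹ * (A + A * A) * P⁻¹ = 1 - P⁻¹ := by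
      have hAP : A * P = A + A * A := by
        rw [hPdef, Matrix.mul_add, Matrix.mul_one]
      calc P⁻¹ * (A + A * A) * P⁻¹ = P⁻¹ * A * (P * P⁻¹) := by
              rw [← hAP]; simp only [Matrix.mul_assoc]
        _ = P⁻¹ * A := by rw [hPinv, Matrix.mul_one]
        _ = P⁻¹ * (1 + A) - P⁻¹ := by
              rw [Matrix.mul_add, Matrix.mul_one, add_sub_cancel_left]
        _ = 1 - P⁻¹ := by rw [← hPdef, hPinv']
    rwa [h2] at h1
  -- factor
  have hfac : 1 + (A + Yᴴ * Y) = P * (1 + P⁻¹ * (Yᴴ * Y)) := by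
    rw [Matrix.mul_add, Matrix.mul_one, ← Matrix.mul_assoc, hPinv, Matrix.one_mul, hPdef,
      add_assoc]
  have hWA : (1 + P⁻¹ * (Yᴴ * Y)).det = (1 + Y * (P⁻¹ * Yᴴ)).det := by
    rw [← Matrix.mul_assoc, ← det_one_add_mul_comm (P⁻¹ * Yᴴ) Y, Matrix.mul_assoc]
  have hYPY : (Y * (P⁻¹ * Yᴴ)).PosSemidef := by
    have := hPinvH.mul_mul_conjTranspose_same Y
    rwa [Matrix.mul_assoc] at this
  have hstep : (1 + Y * (P⁻¹ * Yᴴ)).det ≤ (1 + Yᴴ * Y).det := by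
    have hD : (Y * ((1 - P⁻¹) * Yᴴ)).PosSemidef := by
      have := hsub.mul_mul_conjTranspose_same Y
      rwa [Matrix.mul_assoc] at this
    have hPD : (1 + Y * (P⁻¹ * Yᴴ)).PosDef := Matrix.PosDef.one.add_posSemidef hYPY
    have hid : 1 + Y * (P⁻¹ * Yᴴ) + Y * ((1 - P⁻¹) * Yᴴ) = 1 + Y * Yᴴ := by
      have h11 : P⁻¹ + (1 - P⁻¹) = 1 := by abel
      rw [add_assoc, ← Matrix.mul_add, ← Matrix.add_mul, h11, Matrix.one_mul]
    calc (1 + Y * (P⁻¹ * Yᴴ)).det ≤ (1 + Y * (P⁻¹ * Yᴴ) + Y * ((1 - P⁻¹) * Yᴴ)).det :=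
            aux_det_le_det_add hPD hD
      _ = (1 + Y * Yᴴ).det := by rw [hid]
      _ = (1 + Yᴴ * Y).det := det_one_add_mul_comm Y Yᴴ
  rw [hfac, det_mul]
  exact mul_le_mul_of_nonneg_left (hWA ▸ hstep) hP.det_pos.le

open Matrix ComplexOrder in
/-- Row-splitting form of property (c): splitting the rows of `H` into those
indexed by `S` and by `Sᶜ`,
`det (1 + Hᴴ H) ≤ det (1 + H_Sᴴ H_S) * det (1 + H_{Sᶜ}ᴴ H_{Sᶜ})`. -/
theorem det_one_add_conjTranspose_mul_le_split
    {m n : ℕ} (H : Matrix (Fin m) (Fin n) ℂ) (S : Finset (Fin m)) :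
    (1 + Hᴴ * H).det ≤
      (1 + (H.submatrix (Subtype.val : {i : Fin m // i ∈ S} → Fin m) id)ᴴ *
            H.submatrix (Subtype.val : {i : Fin m // i ∈ S} → Fin m) id).det *
      (1 + (H.submatrix (Subtype.val : {i : Fin m // i ∈ Sᶜ} → Fin m) id)ᴴ *
            H.submatrix (Subtype.val : {i : Fin m // i ∈ Sᶜ} → Fin m) id).det := by
  set X := H.submatrix (Subtype.val : {i : Fin m // i ∈ S} → Fin m) id with hX
  set Y := H.submatrix (Subtype.val : {i : Fin m // i ∈ Sᶜ} → Fin m) id with hY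
  have hsplit : Hᴴ * H = Xᴴ * X + Yᴴ * Y := by
    ext i j
    simp only [hX, hY, Matrix.add_apply, Matrix.mul_apply, Matrix.conjTranspose_apply,
      Matrix.submatrix_apply, id]
    rw [Finset.sum_coe_sort S (fun k => star (H k i) * H k j),
      Finset.sum_coe_sort Sᶜ (fun k => star (H k i) * H k j)]
    exact (Finset.sum_add_sum_compl S _).symm
  rw [hsplit]
  exact aux_main X Y
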